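/- Let ≿ be a complete transitive continuous relation satisfying betweenness on a nonempty compact convex subset X of a Hausdorff topological real vector space, and suppose there exist x, y with x ≻ y (nondegeneracy). Then ≿ admits an implicit mixture-linear representation: there exists u : X × [0,1] → ℝ such that (i) u(·,t) is continuous and mixture-linear for each t ∈ (0,1); (ii) u(x,·) is continuous on (0,1) for each x; (iii) there exist x*, x_* with u(x*,t) = 1 and u(x_*,t) = 0 for all t ∈ [0,1]; (iv) for each x there is a unique t ∈ [0,1] with t = u(x,t); (v) the continuous function U with U(x) = u(x,U(x)) represents ≿. -/

import Mathlib

open Set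

open Filter Topology


section Aux
variable {E : Type*} [AddCommGroup E] [Module ℝ E] [TopologicalSpace E]
  [IsTopologicalAddGroup E] [ContinuousSMul ℝ E]

/-- Strict monotonicity along a segment, from betweenness. -/
lemma mono_seg (X : Set E) (hXconv : Convex ℝ X) (r : E → E → Prop)
    (hbet : ∀ x ∈ X, ∀ y ∈ X, ∀ l ∈ Ioo (0:ℝ) 1,
      (r x y ∧ ¬ r y x) →
        ((r x (l • x + (1 - l) • y) ∧ ¬ r (l • x + (1 - l) • y) x) ∧
         (r (l • x + (1 - l) • y) y ∧ ¬ r y (l • x + (1 - l) • y))))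
    {a b : E} (ha : a ∈ X) (hb : b ∈ X)
    (hab : r a b ∧ ¬ r b a) {l l' : ℝ} (h0 : 0 ≤ l') (hlt : l' < l) (h1 : l ≤ 1) :
    r (l • a + (1-l) • b) (l' • a + (1-l') • b) ∧
      ¬ r (l' • a + (1-l') • b) (l • a + (1-l) • b) := by
  have hl0 : 0 < l := lt_of_le_of_lt h0 hlt
  have hmem : l • a + (1-l) • b ∈ X :=
    hXconv ha hb (le_of_lt hl0) (by linarith) (by ring)
  -- first: (l•a+(1-l)•b) ≻ b
  have hlb : r (l • a + (1-l) • b) b ∧ ¬ r b (l • a + (1-l) • b) := by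
    rcases eq_or_lt_of_le h1 with h | h
    · subst h
      have : (1:ℝ) • a + (1-(1:ℝ)) • b = a := by module
      rw [this]; exact hab
    · exact (hbet a ha b hb l ⟨hl0, h⟩ hab).2
  rcases eq_or_lt_of_le h0 with h | h
  · subst h
    have : (0:ℝ) • a + (1-(0:ℝ)) • b = b := by module
    rw [this]; exact hlb
  · have key := hbet _ hmem b hb (l'/l)
      ⟨div_pos h hl0, (div_lt_one hl0).2 hlt⟩ hlb
    have hEq : (l'/l) • (l • a + (1-l) • b) + (1 - l'/l) • b
        = l' • a + (1-l') • b := by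
      have hne : l ≠ 0 := ne_of_gt hl0
      match_scalars <;> field_simp <;> ring
    rw [hEq] at key
    exact key.1

/-- Flatness of indifference sets, from betweenness. -/
lemma flat_seg (X : Set E) (hXconv : Convex ℝ X) (r : E → E → Prop)
    (hcomp : ∀ x ∈ X, ∀ y ∈ X, r x y ∨ r y x)
    (htrans : ∀ x ∈ X, ∀ y ∈ X, ∀ z ∈ X, r x y → r y z → r x z)
    (hbet : ∀ x ∈ X, ∀ y ∈ X, ∀ l ∈ Ioo (0:ℝ) 1,
      (r x y ∧ ¬ r y x) →
        ((r x (l • x + (1 - l) • y) ∧ ¬ r (l • x + (1 - l) • y) x) ∧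
         (r (l • x + (1 - l) • y) y ∧ ¬ r y (l • x + (1 - l) • y))))
    {a b : E} (ha : a ∈ X) (hb : b ∈ X)
    (hab : r a b) (hba : r b a) {l : ℝ} (h0 : 0 ≤ l) (h1 : l ≤ 1) :
    r (l • a + (1-l) • b) a ∧ r a (l • a + (1-l) • b) := by
  have hrefl : ∀ x ∈ X, r x x := fun x hx => (hcomp x hx x hx).elim id id
  rcases eq_or_lt_of_le h0 with h | h0'
  · subst h
    have : (0:ℝ) • a + (1-(0:ℝ)) • b = b := by module
    rw [this]; exact ⟨hba, hab⟩
  rcases eq_or_lt_of_le h1 with h | h1'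
  · subst h
    have : (1:ℝ) • a + (1-(1:ℝ)) • b = a := by module
    rw [this]; exact ⟨hrefl a ha, hrefl a ha⟩
  set m := l • a + (1-l) • b with hm
  have hmX : m ∈ X := hXconv ha hb (le_of_lt h0') (by linarith) (by ring)
  set q := (l/2) • a + (1-l/2) • b with hq
  have hqX : q ∈ X := hXconv ha hb (by linarith) (by linarith) (by ring)
  have hqm : q = (1/2 : ℝ) • m + (1 - 1/2 : ℝ) • b := by
    rw [hm]; match_scalars <;> ring
  constructor
  · -- show r m a ; suppose not, then a ≻ m (Case A)
    by_contra hma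
    have hamS : r a m ∧ ¬ r m a := ⟨(hcomp a ha m hmX).resolve_right hma, hma⟩
    have hbmS : r b m ∧ ¬ r m b := by
      constructor
      · exact htrans b hb a ha m hmX hba hamS.1
      · intro hmb; exact hma (htrans m hmX b hb a ha hmb hba)
    -- b ≻ q ≻ m
    have hqm2 : (1/2 : ℝ) • b + (1 - 1/2 : ℝ) • m = q := by
      rw [hq, hm]; match_scalars <;> ring
    have key := hbet b hb m hmX (1/2) (by norm_num) hbmS
    rw [hqm2] at key
    have hbq := key.1
    have hqmS := key.2
    -- a ≻ q
    have haqS : r a q ∧ ¬ r q a := by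
      constructor
      · exact htrans a ha b hb q hqX hab hbq.1
      · intro hqa
        exact hbq.2 (htrans q hqX a ha b hb hqa hab)
    -- m is an interior mixture of a and q
    have hν : (l/(2-l)) ∈ Ioo (0:ℝ) 1 := by
      constructor
      · exact div_pos h0' (by linarith)
      · rw [div_lt_one (by linarith)]; linarith
    have key2 := hbet a ha q hqX (l/(2-l)) hν haqS
    have hEq : (l/(2-l)) • a + (1 - l/(2-l)) • q = m := by
      rw [hq, hm]
      have h2 : (2:ℝ) - l ≠ 0 := by linarith
      have h4 : (4:ℝ) - l*2 ≠ 0 := by linarith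
      match_scalars <;> field_simp <;> ring
    rw [hEq] at key2
    -- key2.2 : m ≻ q, contradicting q ≻ m
    exact hqmS.2 key2.2.1
  · -- show r a m ; suppose not, then m ≻ a (Case B)
    by_contra ham
    have hmaS : r m a ∧ ¬ r a m := ⟨(hcomp a ha m hmX).resolve_left ham, ham⟩
    have hmbS : r m b ∧ ¬ r b m := by
      constructor
      · exact htrans m hmX a ha b hb hmaS.1 hab
      · intro hbm; exact ham (htrans a ha b hb m hmX hab hbm)
    -- m ≻ q ≻ b
    have key := hbet m hmX b hb (1/2) (by norm_num) hmbS
    rw [← hqm] at key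
    have hmq := key.1
    have hqb := key.2
    -- q ≻ a
    have hqaS : r q a ∧ ¬ r a q := by
      constructor
      · exact htrans q hqX b hb a ha hqb.1 hba
      · intro haq
        exact hqb.2 (htrans b hb a ha q hqX hba haq)
    -- m is an interior mixture of q and a
    have hβ : ((1-l)/(1-l/2)) ∈ Ioo (0:ℝ) 1 := by
      constructor
      · exact div_pos (by linarith) (by linarith)
      · rw [div_lt_one (by linarith)]; linarith
    have key2 := hbet q hqX a ha ((1-l)/(1-l/2)) hβ hqaS
    have hEq : ((1-l)/(1-l/2)) • q + (1 - (1-l)/(1-l/2)) • a = m := by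
      rw [hq, hm]
      have h2 : (1:ℝ) - l/2 ≠ 0 := by linarith
      have h2b : (2:ℝ) - l ≠ 0 := by linarith
      have h4 : (4:ℝ) - l*2 ≠ 0 := by linarith
      match_scalars <;> field_simp <;> ring
    rw [hEq] at key2
    -- key2.1 : q ≻ m, contradicting m ≻ q
    exact hmq.2 key2.1.1
end Aux

section PartA
variable {E : Type*} [AddCommGroup E] [Module ℝ E] [TopologicalSpace E]
  [IsTopologicalAddGroup E] [ContinuousSMul ℝ E]

lemma exists_max (X : Set E) (hXne : X.Nonempty) (hXcomp : IsCompact X)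
    (r : E → E → Prop)
    (hcomp : ∀ x ∈ X, ∀ y ∈ X, r x y ∨ r y x)
    (htrans : ∀ x ∈ X, ∀ y ∈ X, ∀ z ∈ X, r x y → r y z → r x z)
    (hclosed : ∀ y ∈ X, IsClosed {x ∈ X | r x y}) :
    ∃ m ∈ X, ∀ y ∈ X, r m y := by
  have : Nonempty ↥X := hXne.to_subtype
  set Z : ↥X → Set E := fun y => {x ∈ X | r x y.1} with hZ
  have hdir : Directed (· ⊇ ·) Z := by
    intro a b
    rcases hcomp a.1 a.2 b.1 b.2 with h | h
    · exact ⟨a, subset_rfl, fun x hx => ⟨hx.1, htrans x hx.1 a.1 a.2 b.1 b.2 hx.2 h⟩⟩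
    · exact ⟨b, fun x hx => ⟨hx.1, htrans x hx.1 b.1 b.2 a.1 a.2 hx.2 h⟩, subset_rfl⟩
  have hne : ∀ i, (Z i).Nonempty := fun i => ⟨i.1, i.2, (hcomp i.1 i.2 i.1 i.2).elim id id⟩
  have hcl : ∀ i, IsClosed (Z i) := fun i => hclosed i.1 i.2
  have hcpt : ∀ i, IsCompact (Z i) := fun i => hXcomp.of_isClosed_subset (hcl i) (fun x hx => hx.1)
  obtain ⟨m, hm⟩ := IsCompact.nonempty_iInter_of_directed_nonempty_isCompact_isClosed Z hdir hne hcpt hcl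
  have hmX : m ∈ X := by
    obtain ⟨x0, hx0⟩ := hXne
    exact (mem_iInter.1 hm ⟨x0, hx0⟩).1
  exact ⟨m, hmX, fun y hy => (mem_iInter.1 hm ⟨y, hy⟩).2⟩

lemma partA (X : Set E) (hXne : X.Nonempty) (hXconv : Convex ℝ X) (hXcomp : IsCompact X)
    (r : E → E → Prop)
    (hcomp : ∀ x ∈ X, ∀ y ∈ X, r x y ∨ r y x)
    (htrans : ∀ x ∈ X, ∀ y ∈ X, ∀ z ∈ X, r x y → r y z → r x z)
    (hclosed : ∀ y ∈ X, IsClosed {x ∈ X | r x y} ∧ IsClosed {x ∈ X | r y x})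
    (hbet : ∀ x ∈ X, ∀ y ∈ X, ∀ l ∈ Ioo (0:ℝ) 1,
      (r x y ∧ ¬ r y x) →
        ((r x (l • x + (1 - l) • y) ∧ ¬ r (l • x + (1 - l) • y) x) ∧
         (r (l • x + (1 - l) • y) y ∧ ¬ r y (l • x + (1 - l) • y))))
    (hnond : ∃ x ∈ X, ∃ y ∈ X, r x y ∧ ¬ r y x) :
    ∃ U : E → ℝ, ∃ xs ∈ X, ∃ xl ∈ X,
      (∀ x ∈ X, ContinuousWithinAt U X x) ∧
      (∀ x ∈ X, U x ∈ Icc (0:ℝ) 1) ∧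
      (∀ t ∈ Icc (0:ℝ) 1, U (t • xs + (1-t) • xl) = t) ∧
      (∀ x ∈ X, ∀ y ∈ X, (r x y ↔ U y ≤ U x)) := by
  obtain ⟨xs, hxs, hmax⟩ := exists_max X hXne hXcomp r hcomp htrans (fun y hy => (hclosed y hy).1)
  obtain ⟨xl, hxl, hmin⟩ := exists_max X hXne hXcomp (fun a b => r b a)
    (fun x hx y hy => (hcomp y hy x hx))
    (fun x hx y hy z hz h1 h2 => htrans z hz y hy x hx h2 h1)
    (fun y hy => (hclosed y hy).2)
  -- xs ≻ xl
  have hS : r xs xl ∧ ¬ r xl xs := by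
    obtain ⟨x, hx, y, hy, hxy⟩ := hnond
    refine ⟨hmax xl hxl, fun h => hxy.2 ?_⟩
    exact htrans y hy xs hxs x hx (htrans y hy xl hxl xs hxs (hmin y hy) h) (hmax x hx)
  set z : ℝ → E := fun t => t • xs + (1-t) • xl with hzdef
  have hzmem : ∀ t ∈ Icc (0:ℝ) 1, z t ∈ X := fun t ht =>
    hXconv hxs hxl ht.1 (by linarith [ht.2]) (by ring)
  have hzcont : Continuous z := by
    exact (continuous_id.smul continuous_const).add
      ((continuous_const.sub continuous_id).smul continuous_const)
  have hz1 : z 1 = xs := by rw [hzdef]; simp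
  have hz0 : z 0 = xl := by rw [hzdef]; simp
  have hzmono : ∀ t t' : ℝ, 0 ≤ t' → t' < t → t ≤ 1 →
      r (z t) (z t') ∧ ¬ r (z t') (z t) :=
    fun t t' h0 hlt h1 => mono_seg X hXconv r hbet hxs hxl hS h0 hlt h1
  set U : E → ℝ := fun x => sInf {t | t ∈ Icc (0:ℝ) 1 ∧ r (z t) x} with hUdef
  -- calibration
  have hUcal : ∀ x ∈ X, U x ∈ Icc (0:ℝ) 1 ∧ r (z (U x)) x ∧ r x (z (U x)) := by
    intro x hx
    set A := {t | t ∈ Icc (0:ℝ) 1 ∧ r (z t) x} with hA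
    have hAsub : A ⊆ Icc (0:ℝ) 1 := fun t ht => ht.1
    have hA1 : (1:ℝ) ∈ A := ⟨⟨zero_le_one, le_refl 1⟩, by rw [hz1]; exact hmax x hx⟩
    have hAcl : IsClosed A := by
      have : A = Icc (0:ℝ) 1 ∩ z ⁻¹' {w ∈ X | r w x} := by
        ext t
        constructor
        · rintro ⟨ht, hr⟩; exact ⟨ht, hzmem t ht, hr⟩
        · rintro ⟨ht, _, hr⟩; exact ⟨ht, hr⟩
      rw [this]
      exact isClosed_Icc.inter ((hclosed x hx).1.preimage hzcont)
    have hmem : U x ∈ A := hAcl.csInf_mem ⟨1, hA1⟩ ⟨0, fun t ht => (hAsub ht).1⟩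
    refine ⟨hAsub hmem, hmem.2, ?_⟩
    rcases eq_or_lt_of_le (hAsub hmem).1 with h0 | h0
    · rw [← h0, hz0]; exact hmin x hx
    · set B := {t | t ∈ Icc (0:ℝ) 1 ∧ r x (z t)} with hB
      have hBcl : IsClosed B := by
        have : B = Icc (0:ℝ) 1 ∩ z ⁻¹' {w ∈ X | r x w} := by
          ext t
          constructor
          · rintro ⟨ht, hr⟩; exact ⟨ht, hzmem t ht, hr⟩
          · rintro ⟨ht, _, hr⟩; exact ⟨ht, hr⟩
        rw [this]
        exact isClosed_Icc.inter ((hclosed x hx).2.preimage hzcont)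
      have hsub : Ico (0:ℝ) (U x) ⊆ B := by
        intro t ht
        have htA : t ∉ A := fun h => not_lt.2 (csInf_le ⟨0, fun s hs => (hAsub hs).1⟩ h) ht.2
        have htIcc : t ∈ Icc (0:ℝ) 1 := ⟨ht.1, le_trans (le_of_lt ht.2) (hAsub hmem).2⟩
        have : ¬ r (z t) x := fun h => htA ⟨htIcc, h⟩
        exact ⟨htIcc, (hcomp x hx (z t) (hzmem t htIcc)).resolve_right this⟩
      have : U x ∈ closure (Ico (0:ℝ) (U x)) := by
        rw [closure_Ico (ne_of_lt h0)]
        exact ⟨le_of_lt h0, le_refl _⟩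
      exact (hBcl.closure_subset ((closure_mono hsub) this)).2
  -- U of calibration points
  have hUz : ∀ t ∈ Icc (0:ℝ) 1, U (z t) = t := by
    intro t ht
    have h := hUcal (z t) (hzmem t ht)
    by_contra hne
    rcases lt_or_gt_of_ne hne with hlt | hlt
    · exact (hzmono t (U (z t)) h.1.1 hlt ht.2).2 h.2.1
    · exact (hzmono (U (z t)) t ht.1 hlt h.1.2).2 h.2.2
  -- representation
  have hUrep : ∀ x ∈ X, ∀ y ∈ X, (r x y ↔ U y ≤ U x) := by
    intro x hx y hy
    obtain ⟨hUx, hzx1, hzx2⟩ := hUcal x hx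
    obtain ⟨hUy, hzy1, hzy2⟩ := hUcal y hy
    constructor
    · intro hxy
      by_contra hlt
      rw [not_le] at hlt
      have h1 : r (z (U x)) (z (U y)) :=
        htrans _ (hzmem _ hUx) y hy _ (hzmem _ hUy)
          (htrans _ (hzmem _ hUx) x hx y hy hzx1 hxy) hzy2
      exact (hzmono (U y) (U x) hUx.1 hlt hUy.2).2 h1
    · intro hle
      rcases eq_or_lt_of_le hle with heq | hlt
      · exact htrans x hx _ (hzmem _ hUx) y hy hzx2 (by rw [← heq]; exact hzy1)
      · have h1 : r (z (U x)) (z (U y)) := (hzmono (U x) (U y) hUy.1 hlt hUx.2).1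
        exact htrans x hx _ (hzmem _ hUx) y hy hzx2
          (htrans _ (hzmem _ hUx) _ (hzmem _ hUy) y hy h1 hzy1)
  -- continuity
  have hUcont : ∀ x ∈ X, ContinuousWithinAt U X x := by
    intro x hx
    rw [ContinuousWithinAt, tendsto_order]
    constructor
    · intro b hb
      by_cases hb0 : b < 0
      · filter_upwards [self_mem_nhdsWithin] with y hy
        exact lt_of_lt_of_le hb0 ((hUcal y hy).1.1)
      · push_neg at hb0
        have hbI : b ∈ Icc (0:ℝ) 1 := ⟨hb0, le_trans (le_of_lt hb) ((hUcal x hx).1.2)⟩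
        have hO : IsOpen ({w ∈ X | r (z b) w})ᶜ := (hclosed (z b) (hzmem b hbI)).2.isOpen_compl
        have hxO : x ∈ ({w ∈ X | r (z b) w})ᶜ := by
          intro hmem
          have := (hUrep (z b) (hzmem b hbI) x hx).1 hmem.2
          rw [hUz b hbI] at this
          exact absurd hb (not_lt.2 this)
        filter_upwards [mem_nhdsWithin_of_mem_nhds (hO.mem_nhds hxO), self_mem_nhdsWithin]
          with y hyO hyX
        by_contra hle
        push_neg at hle
        exact hyO ⟨hyX, (hUrep (z b) (hzmem b hbI) y hyX).2 (by rw [hUz b hbI]; exact hle)⟩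
    · intro b hb
      by_cases hb1 : 1 < b
      · filter_upwards [self_mem_nhdsWithin] with y hy
        exact lt_of_le_of_lt ((hUcal y hy).1.2) hb1
      · push_neg at hb1
        have hbI : b ∈ Icc (0:ℝ) 1 := ⟨le_trans ((hUcal x hx).1.1) (le_of_lt hb), hb1⟩
        have hO : IsOpen ({w ∈ X | r w (z b)})ᶜ := (hclosed (z b) (hzmem b hbI)).1.isOpen_compl
        have hxO : x ∈ ({w ∈ X | r w (z b)})ᶜ := by
          intro hmem
          have := (hUrep x hx (z b) (hzmem b hbI)).1 hmem.2
          rw [hUz b hbI] at this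
          exact absurd hb (not_lt.2 this)
        filter_upwards [mem_nhdsWithin_of_mem_nhds (hO.mem_nhds hxO), self_mem_nhdsWithin]
          with y hyO hyX
        by_contra hle
        push_neg at hle
        exact hyO ⟨hyX, (hUrep y hyX (z b) (hzmem b hbI)).2 (by rw [hUz b hbI]; exact hle)⟩
  exact ⟨U, xs, hxs, xl, hxl, hUcont, fun x hx => (hUcal x hx).1, hUz, hUrep⟩

end PartA
section PartB
variable {E : Type*} [AddCommGroup E] [Module ℝ E] [TopologicalSpace E]
  [IsTopologicalAddGroup E] [ContinuousSMul ℝ E]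

/-- Defining property of Dekel's local utility. -/
def dspec (U : E → ℝ) (xs xl x : E) (t c : ℝ) : Prop :=
  (t ≤ U x → t ≤ c ∧ U ((t/c) • x + (1 - t/c) • xl) = t) ∧
  (U x ≤ t → c ≤ t ∧ U (((1-t)/(1-c)) • x + (1 - (1-t)/(1-c)) • xs) = t)

lemma uniq_mix (X : Set E) (U : E → ℝ)
    (hUmono : ∀ w ∈ X, ∀ q ∈ X, U q < U w → ∀ l l' : ℝ, 0 ≤ l' → l' < l → l ≤ 1 →
      U (l' • w + (1-l') • q) < U (l • w + (1-l) • q)) :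
    ∀ w ∈ X, ∀ q ∈ X, U q ≠ U w → ∀ c c' : ℝ, c ∈ Set.Icc (0:ℝ) 1 → c' ∈ Set.Icc (0:ℝ) 1 →
      U (c • w + (1-c) • q) = U (c' • w + (1-c') • q) → c = c' := by
  have main : ∀ w ∈ X, ∀ q ∈ X, U q < U w → ∀ c c' : ℝ, c ∈ Set.Icc (0:ℝ) 1 →
      c' ∈ Set.Icc (0:ℝ) 1 → U (c • w + (1-c) • q) = U (c' • w + (1-c') • q) → c = c' := by
    intro w hw q hq hlt c c' hc hc' heq
    rcases lt_trichotomy c c' with h | h | h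
    · exact absurd heq (ne_of_lt (hUmono w hw q hq hlt c' c hc.1 h hc'.2))
    · exact h
    · exact absurd heq.symm (ne_of_lt (hUmono w hw q hq hlt c c' hc'.1 h hc.2))
  intro w hw q hq hne c c' hc hc' heq
  rcases lt_or_gt_of_ne hne with h | h
  · exact main w hw q hq h c c' hc hc' heq
  · have e : ∀ d : ℝ, d • w + (1-d) • q = (1-d) • q + (1-(1-d)) • w := by
      intro d; match_scalars <;> ring
    rw [e c, e c'] at heq
    have := main q hq w hw h (1-c) (1-c')
      ⟨by linarith [hc.2], by linarith [hc.1]⟩ ⟨by linarith [hc'.2], by linarith [hc'.1]⟩ heq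
    linarith

lemma spec_exists (X : Set E) (hXconv : Convex ℝ X) (U : E → ℝ) (xs xl : E)
    (hxs : xs ∈ X) (hxl : xl ∈ X) (hUxs : U xs = 1) (hUxl : U xl = 0)
    (hUcont : ∀ x ∈ X, ContinuousWithinAt U X x) :
    ∀ x ∈ X, ∀ t ∈ Set.Ioo (0:ℝ) 1, ∃ c, dspec U xs xl x t c := by
  intro x hx t ht
  obtain ⟨ht0, ht1⟩ := ht
  have hex : (1:ℝ) • x + (1-(1:ℝ)) • xl = x := by module
  have hexs : (1:ℝ) • x + (1-(1:ℝ)) • xs = x := by module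
  rcases lt_trichotomy (U x) t with hlt | heq | hgt
  · -- U x < t : calibrate with xs
    set g : ℝ → ℝ := fun m => U (m • x + (1-m) • xs) with hg
    have hgc : ContinuousOn g (Set.Icc 0 1) := by
      have hp : Continuous fun m : ℝ => m • x + (1-m) • xs :=
        (continuous_id.smul continuous_const).add
          ((continuous_const.sub continuous_id).smul continuous_const)
      exact ContinuousOn.comp (fun w hw => hUcont w hw) hp.continuousOn
        (fun m hm => hXconv hx hxs hm.1 (by linarith [hm.2]) (by ring))
    have hg0 : g 0 = 1 := by
      have e : (0:ℝ) • x + (1-(0:ℝ)) • xs = xs := by module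
      rw [hg]; simp only; rw [e, hUxs]
    have hg1 : g 1 = U x := by rw [hg]; simp only; rw [hexs]
    have hmem : t ∈ Set.Icc (g 1) (g 0) := by rw [hg0, hg1]; exact ⟨le_of_lt hlt, le_of_lt ht1⟩
    obtain ⟨m0, hm0I, hm0⟩ := intermediate_value_Icc' zero_le_one hgc hmem
    have hm0pos : 0 < m0 := by
      rcases eq_or_lt_of_le hm0I.1 with h | h
      · exfalso; rw [← h] at hm0; rw [hg0] at hm0; linarith
      · exact h
    refine ⟨1 - (1-t)/m0, ?_, ?_⟩
    · intro h; exact absurd h (not_le.2 hlt)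
    · intro _
      have h1t : (0:ℝ) < 1 - t := by linarith
      constructor
      · have : 1 - t ≤ (1-t)/m0 := by
          rw [le_div_iff₀ hm0pos]; nlinarith [hm0I.2]
        linarith
      · have e2 : (1-t)/(1-(1 - (1-t)/m0)) = m0 := by
          have : 1 - (1 - (1-t)/m0) = (1-t)/m0 := by ring
          rw [this]
          field_simp
        rw [e2]; exact hm0
  · -- U x = t
    refine ⟨t, fun _ => ⟨le_refl t, ?_⟩, fun _ => ⟨le_refl t, ?_⟩⟩
    · rw [div_self (ne_of_gt ht0), hex]; exact heq
    · rw [div_self (by linarith : (1:ℝ) - t ≠ 0), hexs]; exact heq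
  · -- t < U x : calibrate with xl
    set g : ℝ → ℝ := fun m => U (m • x + (1-m) • xl) with hg
    have hgc : ContinuousOn g (Set.Icc 0 1) := by
      have hp : Continuous fun m : ℝ => m • x + (1-m) • xl :=
        (continuous_id.smul continuous_const).add
          ((continuous_const.sub continuous_id).smul continuous_const)
      exact ContinuousOn.comp (fun w hw => hUcont w hw) hp.continuousOn
        (fun m hm => hXconv hx hxl hm.1 (by linarith [hm.2]) (by ring))
    have hg0 : g 0 = 0 := by
      have e : (0:ℝ) • x + (1-(0:ℝ)) • xl = xl := by module
      rw [hg]; simp only; rw [e, hUxl]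
    have hg1 : g 1 = U x := by rw [hg]; simp only; rw [hex]
    have hmem : t ∈ Set.Icc (g 0) (g 1) := by rw [hg0, hg1]; exact ⟨le_of_lt ht0, le_of_lt hgt⟩
    obtain ⟨m0, hm0I, hm0⟩ := intermediate_value_Icc zero_le_one hgc hmem
    have hm0pos : 0 < m0 := by
      rcases eq_or_lt_of_le hm0I.1 with h | h
      · exfalso; rw [← h] at hm0; rw [hg0] at hm0; linarith
      · exact h
    refine ⟨t/m0, ?_, ?_⟩
    · intro _
      constructor
      · rw [le_div_iff₀ hm0pos]; nlinarith [hm0I.2]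
      · have e2 : t/(t/m0) = m0 := by field_simp
        rw [e2]; exact hm0
    · intro h; exact absurd h (not_le.2 hgt)

lemma spec_unique (X : Set E) (U : E → ℝ) (xs xl : E)
    (hxs : xs ∈ X) (hxl : xl ∈ X) (hUxs : U xs = 1) (hUxl : U xl = 0)
    (hUmono : ∀ w ∈ X, ∀ q ∈ X, U q < U w → ∀ l l' : ℝ, 0 ≤ l' → l' < l → l ≤ 1 →
      U (l' • w + (1-l') • q) < U (l • w + (1-l) • q)) :
    ∀ x ∈ X, ∀ t ∈ Set.Ioo (0:ℝ) 1, ∀ c c', dspec U xs xl x t c → dspec U xs xl x t c' →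
      c = c' := by
  intro x hx t ht c c' h1 h2
  obtain ⟨ht0, ht1⟩ := ht
  rcases le_or_gt t (U x) with h | h
  · obtain ⟨hc, hcal⟩ := h1.1 h
    obtain ⟨hc', hcal'⟩ := h2.1 h
    have hc0 : 0 < c := lt_of_lt_of_le ht0 hc
    have hc0' : 0 < c' := lt_of_lt_of_le ht0 hc'
    have hne : U xl ≠ U x := by rw [hUxl]; linarith
    have key := uniq_mix X U hUmono x hx xl hxl hne (t/c) (t/c')
      ⟨le_of_lt (div_pos ht0 hc0), (div_le_one hc0).2 hc⟩
      ⟨le_of_lt (div_pos ht0 hc0'), (div_le_one hc0').2 hc'⟩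
      (by rw [hcal, hcal'])
    field_simp at key
    linarith
  · obtain ⟨hc, hcal⟩ := h1.2 (le_of_lt h)
    obtain ⟨hc', hcal'⟩ := h2.2 (le_of_lt h)
    have h1c : 0 < 1 - c := by linarith
    have h1c' : 0 < 1 - c' := by linarith
    have h1t : 0 < 1 - t := by linarith
    have hne : U xs ≠ U x := by rw [hUxs]; linarith
    have key := uniq_mix X U hUmono x hx xs hxs hne ((1-t)/(1-c)) ((1-t)/(1-c'))
      ⟨le_of_lt (div_pos h1t h1c), by rw [div_le_one h1c]; linarith⟩
      ⟨le_of_lt (div_pos h1t h1c'), by rw [div_le_one h1c']; linarith⟩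
      (by rw [hcal, hcal'])
    field_simp at key
    linarith
end PartB
section PartB2
variable {E : Type*} [AddCommGroup E] [Module ℝ E] [TopologicalSpace E]
  [IsTopologicalAddGroup E] [ContinuousSMul ℝ E]

lemma branch_facts (X : Set E) (U : E → ℝ) (xs xl : E) (u : E → ℝ → ℝ)
    (hu : ∀ x ∈ X, ∀ t ∈ Set.Ioo (0:ℝ) 1, dspec U xs xl x t (u x t)) :
    ∀ x ∈ X, ∀ t ∈ Set.Ioo (0:ℝ) 1,
      (t ≤ U x ↔ t ≤ u x t) ∧ (U x ≤ t ↔ u x t ≤ t) ∧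
      (t < U x ↔ t < u x t) ∧ (U x < t ↔ u x t < t) ∧ (U x = t ↔ u x t = t) := by
  intro x hx t ht
  obtain ⟨ht0, ht1⟩ := ht
  have hex : (1:ℝ) • x + (1-(1:ℝ)) • xl = x := by module
  have hexs : (1:ℝ) • x + (1-(1:ℝ)) • xs = x := by module
  have p1 : t ≤ U x → t ≤ u x t := fun h => ((hu x hx t ⟨ht0, ht1⟩).1 h).1
  have p2 : U x ≤ t → u x t ≤ t := fun h => ((hu x hx t ⟨ht0, ht1⟩).2 h).1
  have p4 : t < U x → t < u x t := by
    intro h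
    rcases eq_or_lt_of_le (p1 (le_of_lt h)) with he | hlt
    · exfalso
      have hcal := ((hu x hx t ⟨ht0, ht1⟩).1 (le_of_lt h)).2
      rw [← he] at hcal
      rw [div_self (ne_of_gt ht0), hex] at hcal
      exact absurd hcal (ne_of_gt h)
    · exact hlt
  have p5 : U x < t → u x t < t := by
    intro h
    rcases eq_or_lt_of_le (p2 (le_of_lt h)) with he | hlt
    · exfalso
      have hcal := ((hu x hx t ⟨ht0, ht1⟩).2 (le_of_lt h)).2
      rw [he] at hcal
      rw [div_self (by linarith : (1:ℝ) - t ≠ 0), hexs] at hcal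
      exact absurd hcal (ne_of_lt h)
    · exact hlt
  refine ⟨⟨p1, ?_⟩, ⟨p2, ?_⟩, ⟨p4, ?_⟩, ⟨p5, ?_⟩, ?_⟩
  · intro h; by_contra hc; push_neg at hc; exact absurd h (not_le.2 (p5 hc))
  · intro h; by_contra hc; push_neg at hc; exact absurd h (not_le.2 (p4 hc))
  · intro h; by_contra hc; push_neg at hc; exact absurd (p2 hc) (not_le.2 h)
  · intro h; by_contra hc; push_neg at hc; exact absurd (p1 hc) (not_le.2 h)
  · constructor
    · intro h; exact le_antisymm (p2 (le_of_eq h)) (p1 (ge_of_eq h))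
    · intro h
      by_contra hne
      rcases lt_or_gt_of_ne hne with hlt | hlt
      · exact absurd h (ne_of_lt (p5 hlt))
      · exact absurd h (ne_of_gt (p4 hlt))

lemma calib_low (X : Set E) (hXconv : Convex ℝ X) (U : E → ℝ) (xs xl : E)
    (hxs : xs ∈ X) (hxl : xl ∈ X) (hUxs : U xs = 1) (hUxl : U xl = 0)
    (hUX : ∀ x ∈ X, U x ∈ Set.Icc (0:ℝ) 1)
    (hUmono : ∀ w ∈ X, ∀ q ∈ X, U q < U w → ∀ l l' : ℝ, 0 ≤ l' → l' < l → l ≤ 1 →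
      U (l' • w + (1-l') • q) < U (l • w + (1-l) • q))
    (hUflat : ∀ w ∈ X, ∀ q ∈ X, U w = U q → ∀ l : ℝ, 0 ≤ l → l ≤ 1 →
      U (l • w + (1-l) • q) = U w)
    (u : E → ℝ → ℝ)
    (hu : ∀ x ∈ X, ∀ t ∈ Set.Ioo (0:ℝ) 1, dspec U xs xl x t (u x t)) :
    ∀ x ∈ X, ∀ t ∈ Set.Ioo (0:ℝ) 1, ∀ c, t ≤ c →
      U ((t/c) • x + (1 - t/c) • xl) = t → u x t = c := by
  intro x hx t ht c htc hcal
  obtain ⟨ht0, ht1⟩ := ht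
  have hc0 : 0 < c := lt_of_lt_of_le ht0 htc
  have hex : (1:ℝ) • x + (1-(1:ℝ)) • xl = x := by module
  -- first : t ≤ U x
  have hUx : t ≤ U x := by
    by_contra hcon
    push_neg at hcon
    rcases eq_or_lt_of_le (by rw [hUxl]; exact (hUX x hx).1 : U xl ≤ U x) with he | hlt
    · have := hUflat x hx xl hxl he.symm (t/c)
        (le_of_lt (div_pos ht0 hc0)) ((div_le_one hc0).2 htc)
      rw [hcal] at this
      rw [← he] at this
      rw [hUxl] at this
      linarith
    · rcases eq_or_lt_of_le ((div_le_one hc0).2 htc) with he1 | hlt1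
      · rw [he1, hex] at hcal
        linarith
      · have := hUmono x hx xl hxl hlt 1 (t/c) (le_of_lt (div_pos ht0 hc0)) hlt1 le_rfl
        rw [hex, hcal] at this
        linarith
  obtain ⟨hcu, hcalu⟩ := (hu x hx t ⟨ht0, ht1⟩).1 hUx
  have hu0 : 0 < u x t := lt_of_lt_of_le ht0 hcu
  have hne : U xl ≠ U x := by rw [hUxl]; linarith
  have key := uniq_mix X U hUmono x hx xl hxl hne (t/(u x t)) (t/c)
    ⟨le_of_lt (div_pos ht0 hu0), (div_le_one hu0).2 hcu⟩
    ⟨le_of_lt (div_pos ht0 hc0), (div_le_one hc0).2 htc⟩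
    (by rw [hcalu, hcal])
  field_simp at key
  linarith

lemma calib_high (X : Set E) (hXconv : Convex ℝ X) (U : E → ℝ) (xs xl : E)
    (hxs : xs ∈ X) (hxl : xl ∈ X) (hUxs : U xs = 1) (hUxl : U xl = 0)
    (hUX : ∀ x ∈ X, U x ∈ Set.Icc (0:ℝ) 1)
    (hUmono : ∀ w ∈ X, ∀ q ∈ X, U q < U w → ∀ l l' : ℝ, 0 ≤ l' → l' < l → l ≤ 1 →
      U (l' • w + (1-l') • q) < U (l • w + (1-l) • q))
    (hUflat : ∀ w ∈ X, ∀ q ∈ X, U w = U q → ∀ l : ℝ, 0 ≤ l → l ≤ 1 →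
      U (l • w + (1-l) • q) = U w)
    (u : E → ℝ → ℝ)
    (hu : ∀ x ∈ X, ∀ t ∈ Set.Ioo (0:ℝ) 1, dspec U xs xl x t (u x t)) :
    ∀ x ∈ X, ∀ t ∈ Set.Ioo (0:ℝ) 1, ∀ c, c ≤ t →
      U (((1-t)/(1-c)) • x + (1 - (1-t)/(1-c)) • xs) = t → u x t = c := by
  intro x hx t ht c hct hcal
  obtain ⟨ht0, ht1⟩ := ht
  have h1t : (0:ℝ) < 1 - t := by linarith
  have h1c : (0:ℝ) < 1 - c := by linarith
  have hexs : (1:ℝ) • x + (1-(1:ℝ)) • xs = x := by module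
  have hμ1 : (1-t)/(1-c) ≤ 1 := by rw [div_le_one h1c]; linarith
  have hμ0 : 0 < (1-t)/(1-c) := div_pos h1t h1c
  -- first : U x ≤ t
  have hUx : U x ≤ t := by
    by_contra hcon
    push_neg at hcon
    rcases eq_or_lt_of_le (by rw [hUxs]; exact (hUX x hx).2 : U x ≤ U xs) with he | hlt
    · have := hUflat x hx xs hxs he ((1-t)/(1-c)) (le_of_lt hμ0) hμ1
      rw [hcal] at this
      linarith
    · rcases eq_or_lt_of_le hμ1 with he1 | hlt1
      · rw [he1, hexs] at hcal
        linarith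
      · have hrw : ((1-t)/(1-c)) • x + (1 - (1-t)/(1-c)) • xs
            = (1 - (1-t)/(1-c)) • xs + (1 - (1 - (1-t)/(1-c))) • x := by
          match_scalars <;> ring
        rw [hrw] at hcal
        have e0 : (0:ℝ) • xs + (1-(0:ℝ)) • x = x := by module
        have := hUmono xs hxs x hx hlt (1 - (1-t)/(1-c)) 0 le_rfl (by linarith) (by linarith)
        rw [e0, hcal] at this
        linarith
  obtain ⟨hcu, hcalu⟩ := (hu x hx t ⟨ht0, ht1⟩).2 hUx
  have h1u : (0:ℝ) < 1 - u x t := by linarith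
  have hne : U xs ≠ U x := by rw [hUxs]; linarith
  have key := uniq_mix X U hUmono x hx xs hxs hne ((1-t)/(1-(u x t))) ((1-t)/(1-c))
    ⟨le_of_lt (div_pos h1t h1u), by rw [div_le_one h1u]; linarith⟩
    ⟨le_of_lt hμ0, hμ1⟩
    (by rw [hcalu, hcal])
  field_simp at key
  linarith
end PartB2
set_option maxHeartbeats 1000000
section PartB3
variable {E : Type*} [AddCommGroup E] [Module ℝ E] [TopologicalSpace E]
  [IsTopologicalAddGroup E] [ContinuousSMul ℝ E]

lemma lin_low (X : Set E) (hXconv : Convex ℝ X) (U : E → ℝ) (xs xl : E)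
    (hxs : xs ∈ X) (hxl : xl ∈ X) (hUxs : U xs = 1) (hUxl : U xl = 0)
    (hUX : ∀ x ∈ X, U x ∈ Set.Icc (0:ℝ) 1)
    (hUmono : ∀ w ∈ X, ∀ q ∈ X, U q < U w → ∀ l l' : ℝ, 0 ≤ l' → l' < l → l ≤ 1 →
      U (l' • w + (1-l') • q) < U (l • w + (1-l) • q))
    (hUflat : ∀ w ∈ X, ∀ q ∈ X, U w = U q → ∀ l : ℝ, 0 ≤ l → l ≤ 1 →
      U (l • w + (1-l) • q) = U w)
    (u : E → ℝ → ℝ)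
    (hu : ∀ x ∈ X, ∀ t ∈ Set.Ioo (0:ℝ) 1, dspec U xs xl x t (u x t)) :
    ∀ x ∈ X, ∀ y ∈ X, ∀ t ∈ Set.Ioo (0:ℝ) 1, ∀ l ∈ Set.Icc (0:ℝ) 1,
      t ≤ u x t → t ≤ u y t →
      u (l • x + (1-l) • y) t = l * u x t + (1-l) * u y t := by
  intro x hx y hy t ht l hl hta htb
  obtain ⟨ht0, ht1⟩ := ht
  obtain ⟨hl0, hl1⟩ := hl
  have hUx : t ≤ U x := ((branch_facts X U xs xl u hu x hx t ⟨ht0, ht1⟩).1).2 hta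
  have hUy : t ≤ U y := ((branch_facts X U xs xl u hu y hy t ⟨ht0, ht1⟩).1).2 htb
  have hcalx : U ((t/(u x t)) • x + (1 - t/(u x t)) • xl) = t := ((hu x hx t ⟨ht0, ht1⟩).1 hUx).2
  have hcaly : U ((t/(u y t)) • y + (1 - t/(u y t)) • xl) = t := ((hu y hy t ⟨ht0, ht1⟩).1 hUy).2
  set a := u x t with ha
  set b := u y t with hb
  clear_value a b
  have ha0 : 0 < a := lt_of_lt_of_le ht0 hta
  have hb0 : 0 < b := lt_of_lt_of_le ht0 htb
  have hc : t ≤ l * a + (1-l) * b := by nlinarith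
  have hc0 : 0 < l * a + (1-l) * b := lt_of_lt_of_le ht0 hc
  have hPxX : (t/a) • x + (1 - t/a) • xl ∈ X :=
    hXconv hx hxl (le_of_lt (div_pos ht0 ha0))
      (by rw [sub_nonneg]; exact (div_le_one ha0).2 hta) (by ring)
  have hPyX : (t/b) • y + (1 - t/b) • xl ∈ X :=
    hXconv hy hxl (le_of_lt (div_pos ht0 hb0))
      (by rw [sub_nonneg]; exact (div_le_one hb0).2 htb) (by ring)
  have hα0 : 0 ≤ l * a / (l * a + (1-l) * b) := by positivity
  have hα1 : l * a / (l * a + (1-l) * b) ≤ 1 := by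
    rw [div_le_one hc0]; nlinarith
  have hflat := hUflat _ hPxX _ hPyX (by rw [hcalx, hcaly]) _ hα0 hα1
  rw [hcalx] at hflat
  have hne1 : a ≠ 0 := ne_of_gt ha0
  have hne2 : b ≠ 0 := ne_of_gt hb0
  have hne3 : l * a + (1-l) * b ≠ 0 := ne_of_gt hc0
  have hEq : (l * a / (l * a + (1-l) * b)) • ((t/a) • x + (1 - t/a) • xl)
      + (1 - l * a / (l * a + (1-l) * b)) • ((t/b) • y + (1 - t/b) • xl)
      = (t/(l * a + (1-l) * b)) • (l • x + (1-l) • y)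
        + (1 - t/(l * a + (1-l) * b)) • xl := by
    match_scalars <;> field_simp <;> ring
  rw [hEq] at hflat
  exact calib_low X hXconv U xs xl hxs hxl hUxs hUxl hUX hUmono hUflat u hu
    _ (hXconv hx hy hl0 (by linarith) (by ring)) t ⟨ht0, ht1⟩ _ hc hflat

lemma lin_high (X : Set E) (hXconv : Convex ℝ X) (U : E → ℝ) (xs xl : E)
    (hxs : xs ∈ X) (hxl : xl ∈ X) (hUxs : U xs = 1) (hUxl : U xl = 0)
    (hUX : ∀ x ∈ X, U x ∈ Set.Icc (0:ℝ) 1)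
    (hUmono : ∀ w ∈ X, ∀ q ∈ X, U q < U w → ∀ l l' : ℝ, 0 ≤ l' → l' < l → l ≤ 1 →
      U (l' • w + (1-l') • q) < U (l • w + (1-l) • q))
    (hUflat : ∀ w ∈ X, ∀ q ∈ X, U w = U q → ∀ l : ℝ, 0 ≤ l → l ≤ 1 →
      U (l • w + (1-l) • q) = U w)
    (u : E → ℝ → ℝ)
    (hu : ∀ x ∈ X, ∀ t ∈ Set.Ioo (0:ℝ) 1, dspec U xs xl x t (u x t)) :
    ∀ x ∈ X, ∀ y ∈ X, ∀ t ∈ Set.Ioo (0:ℝ) 1, ∀ l ∈ Set.Icc (0:ℝ) 1,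
      u x t ≤ t → u y t ≤ t →
      u (l • x + (1-l) • y) t = l * u x t + (1-l) * u y t := by
  intro x hx y hy t ht l hl hta htb
  obtain ⟨ht0, ht1⟩ := ht
  obtain ⟨hl0, hl1⟩ := hl
  have hUx : U x ≤ t := ((branch_facts X U xs xl u hu x hx t ⟨ht0, ht1⟩).2.1).2 hta
  have hUy : U y ≤ t := ((branch_facts X U xs xl u hu y hy t ⟨ht0, ht1⟩).2.1).2 htb
  have hcalx : U (((1-t)/(1-(u x t))) • x + (1 - (1-t)/(1-(u x t))) • xs) = t :=
    ((hu x hx t ⟨ht0, ht1⟩).2 hUx).2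
  have hcaly : U (((1-t)/(1-(u y t))) • y + (1 - (1-t)/(1-(u y t))) • xs) = t :=
    ((hu y hy t ⟨ht0, ht1⟩).2 hUy).2
  set a := u x t with ha
  set b := u y t with hb
  clear_value a b
  have h1t : (0:ℝ) < 1 - t := by linarith
  have h1a : (0:ℝ) < 1 - a := by linarith
  have h1b : (0:ℝ) < 1 - b := by linarith
  have hc : l * a + (1-l) * b ≤ t := by nlinarith
  have h1c : (0:ℝ) < 1 - (l * a + (1-l) * b) := by linarith
  have hPxX : ((1-t)/(1-a)) • x + (1 - (1-t)/(1-a)) • xs ∈ X :=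
    hXconv hx hxs (le_of_lt (div_pos h1t h1a))
      (by rw [sub_nonneg, div_le_one h1a]; linarith) (by ring)
  have hPyX : ((1-t)/(1-b)) • y + (1 - (1-t)/(1-b)) • xs ∈ X :=
    hXconv hy hxs (le_of_lt (div_pos h1t h1b))
      (by rw [sub_nonneg, div_le_one h1b]; linarith) (by ring)
  have hα0 : 0 ≤ l * (1-a) / (1 - (l * a + (1-l) * b)) := by positivity
  have hα1 : l * (1-a) / (1 - (l * a + (1-l) * b)) ≤ 1 := by
    rw [div_le_one h1c]; nlinarith
  have hflat := hUflat _ hPxX _ hPyX (by rw [hcalx, hcaly]) _ hα0 hα1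
  rw [hcalx] at hflat
  have hne1 : (1:ℝ) - a ≠ 0 := ne_of_gt h1a
  have hne2 : (1:ℝ) - b ≠ 0 := ne_of_gt h1b
  have hne3 : (1:ℝ) - (l * a + (1-l) * b) ≠ 0 := ne_of_gt h1c
  have hne4 : (1:ℝ) - t ≠ 0 := ne_of_gt h1t
  have hEq : (l * (1-a) / (1 - (l * a + (1-l) * b))) • (((1-t)/(1-a)) • x + (1 - (1-t)/(1-a)) • xs)
      + (1 - l * (1-a) / (1 - (l * a + (1-l) * b))) • (((1-t)/(1-b)) • y + (1 - (1-t)/(1-b)) • xs)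
      = ((1-t)/(1 - (l * a + (1-l) * b))) • (l • x + (1-l) • y)
        + (1 - (1-t)/(1 - (l * a + (1-l) * b))) • xs := by
    match_scalars <;> field_simp <;> ring
  rw [hEq] at hflat
  exact calib_high X hXconv U xs xl hxs hxl hUxs hUxl hUX hUmono hUflat u hu
    _ (hXconv hx hy hl0 (by linarith) (by ring)) t ⟨ht0, ht1⟩ _ hc hflat

lemma mixed_indiff (X : Set E) (hXconv : Convex ℝ X) (U : E → ℝ) (xs xl : E)
    (hxs : xs ∈ X) (hxl : xl ∈ X) (hUxs : U xs = 1) (hUxl : U xl = 0)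
    (hUX : ∀ x ∈ X, U x ∈ Set.Icc (0:ℝ) 1)
    (hz : ∀ t ∈ Set.Icc (0:ℝ) 1, U (t • xs + (1-t) • xl) = t)
    (hUmono : ∀ w ∈ X, ∀ q ∈ X, U q < U w → ∀ l l' : ℝ, 0 ≤ l' → l' < l → l ≤ 1 →
      U (l' • w + (1-l') • q) < U (l • w + (1-l) • q))
    (hUflat : ∀ w ∈ X, ∀ q ∈ X, U w = U q → ∀ l : ℝ, 0 ≤ l → l ≤ 1 →
      U (l • w + (1-l) • q) = U w)
    (u : E → ℝ → ℝ)
    (hu : ∀ x ∈ X, ∀ t ∈ Set.Ioo (0:ℝ) 1, dspec U xs xl x t (u x t)) :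
    ∀ x ∈ X, ∀ y ∈ X, ∀ t ∈ Set.Ioo (0:ℝ) 1, t < u x t → u y t < t →
      U (((t - u y t)/(u x t - u y t)) • x + (1 - (t - u y t)/(u x t - u y t)) • y) = t := by
  intro x hx y hy t ht hta htb
  obtain ⟨ht0, ht1⟩ := ht
  have hUx : t < U x := ((branch_facts X U xs xl u hu x hx t ⟨ht0, ht1⟩).2.2.1).2 hta
  have hUy : U y < t := ((branch_facts X U xs xl u hu y hy t ⟨ht0, ht1⟩).2.2.2.1).2 htb
  have hcalx : U ((t/(u x t)) • x + (1 - t/(u x t)) • xl) = t :=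
    ((hu x hx t ⟨ht0, ht1⟩).1 (le_of_lt hUx)).2
  have hcaly : U (((1-t)/(1-(u y t))) • y + (1 - (1-t)/(1-(u y t))) • xs) = t :=
    ((hu y hy t ⟨ht0, ht1⟩).2 (le_of_lt hUy)).2
  set a := u x t with ha
  set b := u y t with hb
  clear_value a b
  have h1t : (0:ℝ) < 1 - t := by linarith
  have hab : 0 < a - b := by linarith
  have ha0 : 0 < a := by linarith
  have h1b : (0:ℝ) < 1 - b := by linarith
  -- the crossing parameter
  set s := (t - b)/(a - b) with hs
  clear_value s
  have hs0 : 0 < s := by rw [hs]; exact div_pos (by linarith) hab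
  have hs1 : s < 1 := by rw [hs, div_lt_one hab]; linarith
  have hPxX : (t/a) • x + (1 - t/a) • xl ∈ X :=
    hXconv hx hxl (le_of_lt (div_pos ht0 ha0))
      (by rw [sub_nonneg, div_le_one ha0]; linarith) (by ring)
  have hQyX : ((1-t)/(1-b)) • y + (1 - (1-t)/(1-b)) • xs ∈ X :=
    hXconv hy hxs (le_of_lt (div_pos h1t h1b))
      (by rw [sub_nonneg, div_le_one h1b]; linarith) (by ring)
  -- weights
  set A := s * a / t with hA
  set B := (1-s) * (1-b) / (1-t) with hB
  clear_value A B
  have hA0 : 0 < A := by rw [hA]; exact div_pos (mul_pos hs0 ha0) ht0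
  have hB0 : 0 < B := by rw [hB]; exact div_pos (mul_pos (by linarith) h1b) h1t
  have hAgt : s < A := by rw [hA, lt_div_iff₀ ht0]; nlinarith
  have hBgt : 1 - s < B := by rw [hB, lt_div_iff₀ h1t]; nlinarith
  have hK1 : 1 < A + B := by linarith
  have hK0 : 0 < A + B := by linarith
  set w := s • x + (1-s) • y with hw
  set zt := t • xs + (1-t) • xl with hzt
  clear_value w zt
  have hwX : w ∈ X := by rw [hw]; exact hXconv hx hy (le_of_lt hs0) (by linarith) (by ring)
  have hztX : zt ∈ X := by rw [hzt]; exact hXconv hxs hxl (le_of_lt ht0) (by linarith) (by ring)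
  have hUzt : U zt = t := by rw [hzt]; exact hz t ⟨le_of_lt ht0, le_of_lt ht1⟩
  -- key algebraic identity
  have hlin : A • ((t/a) • x + (1 - t/a) • xl) + B • (((1-t)/(1-b)) • y + (1 - (1-t)/(1-b)) • xs)
      = w + (A + B - 1) • zt := by
    rw [hA, hB, hw, hzt, hs]
    have h1 : t ≠ 0 := ne_of_gt ht0
    have h2 : (1:ℝ) - t ≠ 0 := ne_of_gt h1t
    have h3 : a ≠ 0 := ne_of_gt ha0
    have h4 : (1:ℝ) - b ≠ 0 := ne_of_gt h1b
    have h5 : a - b ≠ 0 := ne_of_gt hab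
    match_scalars <;> field_simp <;> ring
  -- the flat combination
  have hα1 : A / (A + B) ≤ 1 := by rw [div_le_one hK0]; linarith
  have hα0 : 0 ≤ A / (A + B) := by positivity
  have hflat := hUflat _ hPxX _ hQyX (by rw [hcalx, hcaly]) _ hα0 hα1
  rw [hcalx] at hflat
  have hR : (A / (A + B)) • ((t/a) • x + (1 - t/a) • xl)
      + (1 - A / (A + B)) • (((1-t)/(1-b)) • y + (1 - (1-t)/(1-b)) • xs)
      = (1/(A+B)) • (A • ((t/a) • x + (1 - t/a) • xl)
          + B • (((1-t)/(1-b)) • y + (1 - (1-t)/(1-b)) • xs)) := by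
    have hKne : A + B ≠ 0 := ne_of_gt hK0
    match_scalars <;> field_simp <;> ring
  rw [hR, hlin] at hflat
  have hR2 : (1/(A+B)) • (w + (A + B - 1) • zt)
      = (1/(A+B)) • w + (1 - 1/(A+B)) • zt := by
    have hKne : A + B ≠ 0 := ne_of_gt hK0
    match_scalars <;> field_simp <;> ring
  rw [hR2] at hflat
  -- now conclude U w = t
  have hγ0 : 0 < 1/(A+B) := by positivity
  have hγ1 : 1/(A+B) < 1 := by rw [div_lt_one hK0]; linarith
  rcases lt_trichotomy (U w) t with hlt | heq | hgt
  · exfalso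
    have hmono := hUmono zt hztX w hwX (by rw [hUzt]; exact hlt) 1 (1 - 1/(A+B))
      (by linarith) (by linarith) le_rfl
    have e1 : (1:ℝ) • zt + (1-(1:ℝ)) • w = zt := by module
    have e2 : (1 - 1/(A+B)) • zt + (1 - (1 - 1/(A+B))) • w
        = (1/(A+B)) • w + (1 - 1/(A+B)) • zt := by match_scalars <;> ring
    rw [e1, e2, hflat, hUzt] at hmono
    exact lt_irrefl t hmono
  · exact heq
  · exfalso
    have hmono := hUmono w hwX zt hztX (by rw [hUzt]; exact hgt) (1/(A+B)) 0
      le_rfl hγ0 (le_of_lt hγ1)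
    have e1 : (0:ℝ) • w + (1-(0:ℝ)) • zt = zt := by module
    rw [e1, hflat, hUzt] at hmono
    exact lt_irrefl t hmono
end PartB3
section PartB4
variable {E : Type*} [AddCommGroup E] [Module ℝ E] [TopologicalSpace E]
  [IsTopologicalAddGroup E] [ContinuousSMul ℝ E]

lemma lin_mixed (X : Set E) (hXconv : Convex ℝ X) (U : E → ℝ) (xs xl : E)
    (hxs : xs ∈ X) (hxl : xl ∈ X) (hUxs : U xs = 1) (hUxl : U xl = 0)
    (hUX : ∀ x ∈ X, U x ∈ Set.Icc (0:ℝ) 1)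
    (hz : ∀ t ∈ Set.Icc (0:ℝ) 1, U (t • xs + (1-t) • xl) = t)
    (hUmono : ∀ w ∈ X, ∀ q ∈ X, U q < U w → ∀ l l' : ℝ, 0 ≤ l' → l' < l → l ≤ 1 →
      U (l' • w + (1-l') • q) < U (l • w + (1-l) • q))
    (hUflat : ∀ w ∈ X, ∀ q ∈ X, U w = U q → ∀ l : ℝ, 0 ≤ l → l ≤ 1 →
      U (l • w + (1-l) • q) = U w)
    (u : E → ℝ → ℝ)
    (hu : ∀ x ∈ X, ∀ t ∈ Set.Ioo (0:ℝ) 1, dspec U xs xl x t (u x t)) :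
    ∀ x ∈ X, ∀ y ∈ X, ∀ t ∈ Set.Ioo (0:ℝ) 1, ∀ l ∈ Set.Icc (0:ℝ) 1,
      t < u x t → u y t < t →
      u (l • x + (1-l) • y) t = l * u x t + (1-l) * u y t := by
  intro x hx y hy t ht l hl hta htb
  obtain ⟨ht0, ht1⟩ := ht
  obtain ⟨hl0, hl1⟩ := hl
  have hUw := mixed_indiff X hXconv U xs xl hxs hxl hUxs hUxl hUX hz hUmono hUflat u hu
    x hx y hy t ⟨ht0, ht1⟩ hta htb
  set a := u x t with ha
  set b := u y t with hb
  clear_value a b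
  have hab : 0 < a - b := by linarith
  set s := (t - b)/(a - b) with hs
  clear_value s
  have hs0 : 0 < s := by rw [hs]; exact div_pos (by linarith) hab
  have hs1 : s < 1 := by rw [hs, div_lt_one hab]; linarith
  have hwX : s • x + (1-s) • y ∈ X := hXconv hx hy (le_of_lt hs0) (by linarith) (by ring)
  have huw : u (s • x + (1-s) • y) t = t :=
    ((branch_facts X U xs xl u hu _ hwX t ⟨ht0, ht1⟩).2.2.2.2).1 hUw
  have hts : t = s * a + (1-s) * b := by
    rw [hs]
    have : a - b ≠ 0 := ne_of_gt hab
    field_simp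
    ring
  have h1s : (0:ℝ) < 1 - s := by linarith
  rcases le_or_gt s l with hsl | hsl
  · -- l between s and 1 : mix x with w
    have hβ0 : 0 ≤ (l - s)/(1 - s) := div_nonneg (by linarith) (le_of_lt h1s)
    have hβ1 : (l - s)/(1 - s) ≤ 1 := by rw [div_le_one h1s]; linarith
    have happ := lin_low X hXconv U xs xl hxs hxl hUxs hUxl hUX hUmono hUflat u hu
      x hx _ hwX t ⟨ht0, ht1⟩ ((l - s)/(1 - s)) ⟨hβ0, hβ1⟩ (by rw [← ha]; exact le_of_lt hta) (le_of_eq huw.symm)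
    have hEq : ((l - s)/(1 - s)) • x + (1 - (l - s)/(1 - s)) • (s • x + (1-s) • y)
        = l • x + (1-l) • y := by
      have hne : (1:ℝ) - s ≠ 0 := ne_of_gt h1s
      match_scalars <;> field_simp <;> ring
    rw [hEq, huw, ← ha] at happ
    rw [happ, hts]
    have hne : (1:ℝ) - s ≠ 0 := ne_of_gt h1s
    field_simp
    ring
  · -- l between 0 and s : mix w with y
    have hβ0 : 0 ≤ l/s := div_nonneg hl0 (le_of_lt hs0)
    have hβ1 : l/s ≤ 1 := by rw [div_le_one hs0]; linarith
    have happ := lin_high X hXconv U xs xl hxs hxl hUxs hUxl hUX hUmono hUflat u hu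
      _ hwX y hy t ⟨ht0, ht1⟩ (l/s) ⟨hβ0, hβ1⟩ (le_of_eq huw) (by rw [← hb]; exact le_of_lt htb)
    have hEq : (l/s) • (s • x + (1-s) • y) + (1 - l/s) • y = l • x + (1-l) • y := by
      have hne : s ≠ 0 := ne_of_gt hs0
      match_scalars <;> field_simp <;> ring
    rw [hEq, huw, ← hb] at happ
    rw [happ, hts]
    have hne : s ≠ 0 := ne_of_gt hs0
    field_simp
    ring

lemma lin_all (X : Set E) (hXconv : Convex ℝ X) (U : E → ℝ) (xs xl : E)
    (hxs : xs ∈ X) (hxl : xl ∈ X) (hUxs : U xs = 1) (hUxl : U xl = 0)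
    (hUX : ∀ x ∈ X, U x ∈ Set.Icc (0:ℝ) 1)
    (hz : ∀ t ∈ Set.Icc (0:ℝ) 1, U (t • xs + (1-t) • xl) = t)
    (hUmono : ∀ w ∈ X, ∀ q ∈ X, U q < U w → ∀ l l' : ℝ, 0 ≤ l' → l' < l → l ≤ 1 →
      U (l' • w + (1-l') • q) < U (l • w + (1-l) • q))
    (hUflat : ∀ w ∈ X, ∀ q ∈ X, U w = U q → ∀ l : ℝ, 0 ≤ l → l ≤ 1 →
      U (l • w + (1-l) • q) = U w)
    (u : E → ℝ → ℝ)
    (hu : ∀ x ∈ X, ∀ t ∈ Set.Ioo (0:ℝ) 1, dspec U xs xl x t (u x t)) :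
    ∀ x ∈ X, ∀ y ∈ X, ∀ t ∈ Set.Ioo (0:ℝ) 1, ∀ l ∈ Set.Icc (0:ℝ) 1,
      u (l • x + (1-l) • y) t = l * u x t + (1-l) * u y t := by
  intro x hx y hy t ht l hl
  rcases le_or_gt t (u x t) with hta | hta <;> rcases le_or_gt t (u y t) with htb | htb
  · exact lin_low X hXconv U xs xl hxs hxl hUxs hUxl hUX hUmono hUflat u hu
      x hx y hy t ht l hl hta htb
  · rcases eq_or_lt_of_le hta with he | hlt
    · exact lin_high X hXconv U xs xl hxs hxl hUxs hUxl hUX hUmono hUflat u hu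
        x hx y hy t ht l hl (le_of_eq he.symm) (le_of_lt htb)
    · exact lin_mixed X hXconv U xs xl hxs hxl hUxs hUxl hUX hz hUmono hUflat u hu
        x hx y hy t ht l hl hlt htb
  · -- u x t < t ≤ u y t : symmetric
    rcases eq_or_lt_of_le htb with he | hlt
    · exact lin_high X hXconv U xs xl hxs hxl hUxs hUxl hUX hUmono hUflat u hu
        x hx y hy t ht l hl (le_of_lt hta) (le_of_eq he.symm)
    · have hcomm : l • x + (1-l) • y = (1-l) • y + (1-(1-l)) • x := by
        match_scalars <;> ring
      rw [hcomm]
      rw [lin_mixed X hXconv U xs xl hxs hxl hUxs hUxl hUX hz hUmono hUflat u hu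
        y hy x hx t ht (1-l) ⟨by linarith [hl.2], by linarith [hl.1]⟩ hlt hta]
      ring
  · exact lin_high X hXconv U xs xl hxs hxl hUxs hUxl hUX hUmono hUflat u hu
      x hx y hy t ht l hl (le_of_lt hta) (le_of_lt htb)

lemma cluster_cont (X : Set E) (hXconv : Convex ℝ X) (U : E → ℝ)
    (hUcont : ∀ x ∈ X, ContinuousWithinAt U X x)
    {Y : Type*} [TopologicalSpace Y] (s : Set Y) (f : Y → ℝ) (p : Y → E) (q : E) (τ : Y → ℝ)
    (hf : ∀ y ∈ s, f y ∈ Set.Icc (0:ℝ) 1) (hq : q ∈ X) (hp : ∀ y ∈ s, p y ∈ X)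
    (hpc : ContinuousOn p s) (hτ : ContinuousOn τ s)
    (hsol : ∀ y ∈ s, U (f y • p y + (1 - f y) • q) = τ y)
    (huniq : ∀ y ∈ s, ∀ c ∈ Set.Icc (0:ℝ) 1, U (c • p y + (1-c) • q) = τ y → c = f y) :
    ContinuousOn f s := by
  intro y0 hy0
  rw [ContinuousWithinAt, tendsto_iff_ultrafilter]
  intro 𝒰 h𝒰
  have hmem : ∀ᶠ y in (𝒰 : Filter Y), y ∈ s := h𝒰 self_mem_nhdsWithin
  have hfI : (Ultrafilter.map f 𝒰 : Filter ℝ) ≤ 𝓟 (Set.Icc 0 1) := by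
    rw [Filter.le_principal_iff]
    exact Filter.mem_map.2 (hmem.mono fun y hy => hf y hy)
  obtain ⟨c, hcI, hc⟩ := (isCompact_Icc : IsCompact (Set.Icc (0:ℝ) 1)).ultrafilter_le_nhds
    (Ultrafilter.map f 𝒰) hfI
  have hft : Filter.Tendsto f (𝒰 : Filter Y) (𝓝 c) := hc
  have hpt : Filter.Tendsto p (𝒰 : Filter Y) (𝓝 (p y0)) := (hpc y0 hy0).mono_left h𝒰
  have hτt : Filter.Tendsto τ (𝒰 : Filter Y) (𝓝 (τ y0)) := (hτ y0 hy0).mono_left h𝒰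
  have hGt : Filter.Tendsto (fun y => f y • p y + (1 - f y) • q) (𝒰 : Filter Y)
      (𝓝 (c • p y0 + (1-c) • q)) :=
    (hft.smul hpt).add ((tendsto_const_nhds.sub hft).smul tendsto_const_nhds)
  have hGX : ∀ᶠ y in (𝒰 : Filter Y), (f y • p y + (1 - f y) • q) ∈ X :=
    hmem.mono fun y hy => hXconv (hp y hy) hq (hf y hy).1 (by linarith [(hf y hy).2]) (by ring)
  have hP0X : c • p y0 + (1-c) • q ∈ X :=
    hXconv (hp y0 hy0) hq hcI.1 (by linarith [hcI.2]) (by ring)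
  have hUG : Filter.Tendsto (fun y => U (f y • p y + (1 - f y) • q)) (𝒰 : Filter Y)
      (𝓝 (U (c • p y0 + (1-c) • q))) :=
    Filter.Tendsto.comp (hUcont _ hP0X) (tendsto_nhdsWithin_iff.2 ⟨hGt, hGX⟩)
  have hUG' : Filter.Tendsto τ (𝒰 : Filter Y) (𝓝 (U (c • p y0 + (1-c) • q))) :=
    hUG.congr' (hmem.mono fun y hy => hsol y hy)
  have heq : U (c • p y0 + (1-c) • q) = τ y0 := tendsto_nhds_unique hUG' hτt
  have hcf : c = f y0 := huniq y0 hy0 c hcI heq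
  rw [← hcf]
  exact hft
end PartB4
section PartB5
variable {E : Type*} [AddCommGroup E] [Module ℝ E] [TopologicalSpace E]
  [IsTopologicalAddGroup E] [ContinuousSMul ℝ E]

lemma cont_x (X : Set E) (hXconv : Convex ℝ X) (U : E → ℝ) (xs xl : E)
    (hxs : xs ∈ X) (hxl : xl ∈ X) (hUxs : U xs = 1) (hUxl : U xl = 0)
    (hUX : ∀ x ∈ X, U x ∈ Set.Icc (0:ℝ) 1)
    (hUcont : ∀ x ∈ X, ContinuousWithinAt U X x)
    (hUmono : ∀ w ∈ X, ∀ q ∈ X, U q < U w → ∀ l l' : ℝ, 0 ≤ l' → l' < l → l ≤ 1 →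
      U (l' • w + (1-l') • q) < U (l • w + (1-l) • q))
    (u : E → ℝ → ℝ)
    (hu : ∀ x ∈ X, ∀ t ∈ Set.Ioo (0:ℝ) 1, dspec U xs xl x t (u x t)) :
    ∀ t ∈ Set.Ioo (0:ℝ) 1, ContinuousOn (fun x => u x t) X := by
  intro t ht
  obtain ⟨ht0, ht1⟩ := ht
  set S1 : Set E := {x ∈ X | t ≤ U x} with hS1def
  set S2 : Set E := {x ∈ X | U x ≤ t} with hS2def
  have hb1 : ∀ x ∈ S1, t ≤ u x t :=
    fun x hx => ((branch_facts X U xs xl u hu x hx.1 t ⟨ht0, ht1⟩).1).1 hx.2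
  have hu0 : ∀ x ∈ S1, 0 < u x t := fun x hx => lt_of_lt_of_le ht0 (hb1 x hx)
  have hb2 : ∀ x ∈ S2, u x t ≤ t :=
    fun x hx => ((branch_facts X U xs xl u hu x hx.1 t ⟨ht0, ht1⟩).2.1).1 hx.2
  have h1u : ∀ x ∈ S2, 0 < 1 - u x t := fun x hx => by linarith [hb2 x hx]
  have h1t : (0:ℝ) < 1 - t := by linarith
  -- continuity on S1
  have hfc1 : ContinuousOn (fun x => t / u x t) S1 := by
    apply cluster_cont X hXconv U hUcont S1 (fun x => t / u x t) id xl (fun _ => t)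
    · intro y hy
      exact ⟨le_of_lt (div_pos ht0 (hu0 y hy)), (div_le_one (hu0 y hy)).2 (hb1 y hy)⟩
    · exact hxl
    · exact fun y hy => hy.1
    · exact continuousOn_id
    · exact continuousOn_const
    · intro y hy
      exact ((hu y hy.1 t ⟨ht0, ht1⟩).1 hy.2).2
    · intro y hy c hc hcal
      have h1 := ((hu y hy.1 t ⟨ht0, ht1⟩).1 hy.2).2
      have hne : U xl ≠ U y := by
        rw [hUxl]; exact ne_of_lt (lt_of_lt_of_le ht0 hy.2)
      exact uniq_mix X U hUmono y hy.1 xl hxl hne c (t / u y t) hc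
        ⟨le_of_lt (div_pos ht0 (hu0 y hy)), (div_le_one (hu0 y hy)).2 (hb1 y hy)⟩
        (by simp only [id_eq] at hcal; rw [hcal, h1])
  have hcS1 : ContinuousOn (fun x => u x t) S1 := by
    have hcont : ContinuousOn (fun x : E => t / (t / u x t)) S1 :=
      continuousOn_const.div hfc1 (fun x hx => ne_of_gt (div_pos ht0 (hu0 x hx)))
    exact hcont.congr (fun x hx => by field_simp)
  -- continuity on S2
  have hfc2 : ContinuousOn (fun x => (1-t) / (1 - u x t)) S2 := by
    apply cluster_cont X hXconv U hUcont S2 (fun x => (1-t) / (1 - u x t)) id xs (fun _ => t)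
    · intro y hy
      refine ⟨le_of_lt (div_pos h1t (h1u y hy)), ?_⟩
      rw [div_le_one (h1u y hy)]; linarith [hb2 y hy]
    · exact hxs
    · exact fun y hy => hy.1
    · exact continuousOn_id
    · exact continuousOn_const
    · intro y hy
      exact ((hu y hy.1 t ⟨ht0, ht1⟩).2 hy.2).2
    · intro y hy c hc hcal
      have h1 := ((hu y hy.1 t ⟨ht0, ht1⟩).2 hy.2).2
      have hne : U xs ≠ U y := by
        rw [hUxs]; exact (ne_of_gt (lt_of_le_of_lt hy.2 ht1))
      refine uniq_mix X U hUmono y hy.1 xs hxs hne c ((1-t) / (1 - u y t)) hc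
        ⟨le_of_lt (div_pos h1t (h1u y hy)), ?_⟩
        (by simp only [id_eq] at hcal; rw [hcal, h1])
      rw [div_le_one (h1u y hy)]; linarith [hb2 y hy]
  have hcS2 : ContinuousOn (fun x => u x t) S2 := by
    have hcont : ContinuousOn (fun x : E => 1 - (1-t) / ((1-t) / (1 - u x t))) S2 :=
      continuousOn_const.sub (continuousOn_const.div hfc2
        (fun x hx => ne_of_gt (div_pos h1t (h1u x hx))))
    refine hcont.congr (fun x hx => ?_)
    have hne1 : (1:ℝ) - u x t ≠ 0 := ne_of_gt (h1u x hx)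
    have hne2 : (1:ℝ) - t ≠ 0 := ne_of_gt h1t
    field_simp
    ring
  -- glue
  intro x hx
  have hsub : X ⊆ S1 ∪ S2 := by
    intro y hy
    rcases le_or_gt t (U y) with h | h
    · exact Or.inl ⟨hy, h⟩
    · exact Or.inr ⟨hy, le_of_lt h⟩
  rcases lt_trichotomy (U x) t with hlt | heq | hlt
  · have hev : S2 ∈ 𝓝[X] x := by
      have h1 : ∀ᶠ y in 𝓝[X] x, U y < t := (hUcont x hx).eventually_lt_const hlt
      have h2 : ∀ᶠ y in 𝓝[X] x, y ∈ X := self_mem_nhdsWithin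
      exact (h1.and h2).mono (fun y hy => ⟨hy.2, le_of_lt hy.1⟩)
    exact (hcS2 x ⟨hx, le_of_lt hlt⟩).mono_of_mem_nhdsWithin hev
  · have h1 : ContinuousWithinAt (fun x => u x t) (S1 ∪ S2) x :=
      (hcS1 x ⟨hx, le_of_eq heq.symm⟩).union (hcS2 x ⟨hx, le_of_eq heq⟩)
    exact h1.mono hsub
  · have hev : S1 ∈ 𝓝[X] x := by
      have h1 : ∀ᶠ y in 𝓝[X] x, t < U y := (hUcont x hx).eventually_const_lt hlt
      have h2 : ∀ᶠ y in 𝓝[X] x, y ∈ X := self_mem_nhdsWithin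
      exact (h1.and h2).mono (fun y hy => ⟨hy.2, le_of_lt hy.1⟩)
    exact (hcS1 x ⟨hx, le_of_lt hlt⟩).mono_of_mem_nhdsWithin hev

lemma cont_t (X : Set E) (hXconv : Convex ℝ X) (U : E → ℝ) (xs xl : E)
    (hxs : xs ∈ X) (hxl : xl ∈ X) (hUxs : U xs = 1) (hUxl : U xl = 0)
    (hUX : ∀ x ∈ X, U x ∈ Set.Icc (0:ℝ) 1)
    (hUcont : ∀ x ∈ X, ContinuousWithinAt U X x)
    (hUmono : ∀ w ∈ X, ∀ q ∈ X, U q < U w → ∀ l l' : ℝ, 0 ≤ l' → l' < l → l ≤ 1 →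
      U (l' • w + (1-l') • q) < U (l • w + (1-l) • q))
    (u : E → ℝ → ℝ)
    (hu : ∀ x ∈ X, ∀ t ∈ Set.Ioo (0:ℝ) 1, dspec U xs xl x t (u x t)) :
    ∀ x ∈ X, ContinuousOn (u x) (Set.Ioo (0:ℝ) 1) := by
  intro x hx
  set T1 : Set ℝ := {t ∈ Set.Ioo (0:ℝ) 1 | t ≤ U x} with hT1def
  set T2 : Set ℝ := {t ∈ Set.Ioo (0:ℝ) 1 | U x ≤ t} with hT2def
  have hb1 : ∀ t ∈ T1, t ≤ u x t :=
    fun t htm => ((branch_facts X U xs xl u hu x hx t htm.1).1).1 htm.2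
  have hu0 : ∀ t ∈ T1, 0 < u x t := fun t htm => lt_of_lt_of_le htm.1.1 (hb1 t htm)
  have hb2 : ∀ t ∈ T2, u x t ≤ t :=
    fun t htm => ((branch_facts X U xs xl u hu x hx t htm.1).2.1).1 htm.2
  have h1u : ∀ t ∈ T2, 0 < 1 - u x t := fun t htm => by linarith [hb2 t htm, htm.1.2]
  -- continuity on T1
  have hfc1 : ContinuousOn (fun t => t / u x t) T1 := by
    apply cluster_cont X hXconv U hUcont T1 (fun t => t / u x t) (fun _ => x) xl (fun t => t)
    · intro t htm
      exact ⟨le_of_lt (div_pos htm.1.1 (hu0 t htm)), (div_le_one (hu0 t htm)).2 (hb1 t htm)⟩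
    · exact hxl
    · exact fun _ _ => hx
    · exact continuousOn_const
    · exact continuousOn_id
    · intro t htm
      exact ((hu x hx t htm.1).1 htm.2).2
    · intro t htm c hc hcal
      have h1 := ((hu x hx t htm.1).1 htm.2).2
      have hne : U xl ≠ U x := by
        rw [hUxl]; exact ne_of_lt (lt_of_lt_of_le htm.1.1 htm.2)
      exact uniq_mix X U hUmono x hx xl hxl hne c (t / u x t) hc
        ⟨le_of_lt (div_pos htm.1.1 (hu0 t htm)), (div_le_one (hu0 t htm)).2 (hb1 t htm)⟩
        (by rw [hcal, h1])
  have hcT1 : ContinuousOn (u x) T1 := by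
    have hcont : ContinuousOn (fun t : ℝ => t / (t / u x t)) T1 :=
      continuousOn_id.div hfc1 (fun t htm => ne_of_gt (div_pos htm.1.1 (hu0 t htm)))
    refine hcont.congr (fun t htm => ?_)
    have hne1 : u x t ≠ 0 := ne_of_gt (hu0 t htm)
    have hne2 : t ≠ 0 := ne_of_gt htm.1.1
    field_simp
  -- continuity on T2
  have hfc2 : ContinuousOn (fun t => (1-t) / (1 - u x t)) T2 := by
    apply cluster_cont X hXconv U hUcont T2 (fun t => (1-t) / (1 - u x t)) (fun _ => x) xs
      (fun t => t)
    · intro t htm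
      have h1t : (0:ℝ) < 1 - t := by linarith [htm.1.2]
      refine ⟨le_of_lt (div_pos h1t (h1u t htm)), ?_⟩
      rw [div_le_one (h1u t htm)]; linarith [hb2 t htm]
    · exact hxs
    · exact fun _ _ => hx
    · exact continuousOn_const
    · exact continuousOn_id
    · intro t htm
      exact ((hu x hx t htm.1).2 htm.2).2
    · intro t htm c hc hcal
      have h1 := ((hu x hx t htm.1).2 htm.2).2
      have h1t : (0:ℝ) < 1 - t := by linarith [htm.1.2]
      have hne : U xs ≠ U x := by
        rw [hUxs]; exact (ne_of_gt (lt_of_le_of_lt htm.2 htm.1.2))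
      refine uniq_mix X U hUmono x hx xs hxs hne c ((1-t) / (1 - u x t)) hc
        ⟨le_of_lt (div_pos h1t (h1u t htm)), ?_⟩ (by rw [hcal, h1])
      rw [div_le_one (h1u t htm)]; linarith [hb2 t htm]
  have hcT2 : ContinuousOn (u x) T2 := by
    have hcont : ContinuousOn (fun t : ℝ => 1 - (1-t) / ((1-t) / (1 - u x t))) T2 :=
      continuousOn_const.sub ((continuousOn_const.sub continuousOn_id).div hfc2
        (fun t htm => ne_of_gt (div_pos (by linarith [htm.1.2] : (0:ℝ) < 1 - t) (h1u t htm))))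
    refine hcont.congr (fun t htm => ?_)
    have hne1 : (1:ℝ) - u x t ≠ 0 := ne_of_gt (h1u t htm)
    have hne2 : (1:ℝ) - t ≠ 0 := by
      have := htm.1.2; intro h; nlinarith
    field_simp
    ring
  -- glue
  intro t0 ht0I
  have hsub : Set.Ioo (0:ℝ) 1 ⊆ T1 ∪ T2 := by
    intro s hs
    rcases le_or_gt s (U x) with h | h
    · exact Or.inl ⟨hs, h⟩
    · exact Or.inr ⟨hs, le_of_lt h⟩
  rcases lt_trichotomy t0 (U x) with hlt | heq | hlt
  · have hev : T1 ∈ 𝓝[Set.Ioo (0:ℝ) 1] t0 := by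
      refine Filter.mem_of_superset
        (Filter.inter_mem (mem_nhdsWithin_of_mem_nhds (Iio_mem_nhds hlt)) self_mem_nhdsWithin) ?_
      exact fun s hs => ⟨hs.2, le_of_lt hs.1⟩
    exact (hcT1 t0 ⟨ht0I, le_of_lt hlt⟩).mono_of_mem_nhdsWithin hev
  · have h1 : ContinuousWithinAt (u x) (T1 ∪ T2) t0 :=
      (hcT1 t0 ⟨ht0I, le_of_eq heq⟩).union (hcT2 t0 ⟨ht0I, le_of_eq heq.symm⟩)
    exact h1.mono hsub
  · have hev : T2 ∈ 𝓝[Set.Ioo (0:ℝ) 1] t0 := by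
      refine Filter.mem_of_superset
        (Filter.inter_mem (mem_nhdsWithin_of_mem_nhds (Ioi_mem_nhds hlt)) self_mem_nhdsWithin) ?_
      exact fun s hs => ⟨hs.2, le_of_lt hs.1⟩
    exact (hcT2 t0 ⟨ht0I, le_of_lt hlt⟩).mono_of_mem_nhdsWithin hev
end PartB5

theorem dekel_representation
    {E : Type*} [AddCommGroup E] [Module ℝ E] [TopologicalSpace E]
    [IsTopologicalAddGroup E] [ContinuousSMul ℝ E] [T2Space E]
    (X : Set E) (hXne : X.Nonempty) (hXconv : Convex ℝ X) (hXcomp : IsCompact X)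
    (r : E → E → Prop)
    (hcomp : ∀ x ∈ X, ∀ y ∈ X, r x y ∨ r y x)
    (htrans : ∀ x ∈ X, ∀ y ∈ X, ∀ z ∈ X, r x y → r y z → r x z)
    (hclosed : ∀ y ∈ X, IsClosed {x ∈ X | r x y} ∧ IsClosed {x ∈ X | r y x})
    (hbet : ∀ x ∈ X, ∀ y ∈ X, ∀ l ∈ Ioo (0:ℝ) 1,
      (r x y ∧ ¬ r y x) →
        ((r x (l • x + (1 - l) • y) ∧ ¬ r (l • x + (1 - l) • y) x) ∧
         (r (l • x + (1 - l) • y) y ∧ ¬ r y (l • x + (1 - l) • y))))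
    (hnond : ∃ x ∈ X, ∃ y ∈ X, r x y ∧ ¬ r y x) :
    ∃ u : E → ℝ → ℝ,
      -- (i) mixture linearity and continuity in the first argument
      (∀ t ∈ Ioo (0:ℝ) 1, ContinuousOn (fun x => u x t) X ∧
        ∀ x ∈ X, ∀ y ∈ X, ∀ l ∈ Icc (0:ℝ) 1,
          u (l • x + (1 - l) • y) t = l * u x t + (1 - l) * u y t) ∧
      -- (ii) continuity in the second argument
      (∀ x ∈ X, ContinuousOn (u x) (Ioo (0:ℝ) 1)) ∧
      -- (iii) normalization
      (∃ xstar ∈ X, ∃ xlow ∈ X,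
        ∀ t ∈ Icc (0:ℝ) 1, u xstar t = 1 ∧ u xlow t = 0) ∧
      -- (iv) unique fixed point
      (∀ x ∈ X, ∃! t : ℝ, t ∈ Icc (0:ℝ) 1 ∧ t = u x t) ∧
      -- (v) the implicit utility is continuous and represents the relation
      (∃ U : E → ℝ, ContinuousOn U X ∧
        (∀ x ∈ X, U x = u x (U x)) ∧
        (∀ x ∈ X, ∀ y ∈ X, (r x y ↔ U x ≥ U y))) := by
  obtain ⟨U, xs, hxs, xl, hxl, hUcont, hUX, hz, hUrep⟩ :=
    partA X hXne hXconv hXcomp r hcomp htrans hclosed hbet hnond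
  have hUxs : U xs = 1 := by
    have h := hz 1 ⟨zero_le_one, le_refl 1⟩
    have e : (1:ℝ) • xs + (1-(1:ℝ)) • xl = xs := by module
    rwa [e] at h
  have hUxl : U xl = 0 := by
    have h := hz 0 ⟨le_refl 0, zero_le_one⟩
    have e : (0:ℝ) • xs + (1-(0:ℝ)) • xl = xl := by module
    rwa [e] at h
  have hstrict : ∀ a ∈ X, ∀ b ∈ X, U b < U a → (r a b ∧ ¬ r b a) := by
    intro a ha b hb hlt
    refine ⟨(hUrep a ha b hb).2 (le_of_lt hlt), fun h => ?_⟩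
    exact absurd ((hUrep b hb a ha).1 h) (not_le.2 hlt)
  have hUmono : ∀ w ∈ X, ∀ q ∈ X, U q < U w → ∀ l l' : ℝ, 0 ≤ l' → l' < l → l ≤ 1 →
      U (l' • w + (1-l') • q) < U (l • w + (1-l) • q) := by
    intro w hw q hq hlt l l' h0 hl h1
    have hm := mono_seg X hXconv r hbet hw hq (hstrict w hw q hq hlt) h0 hl h1
    have hmem1 : l • w + (1-l) • q ∈ X := hXconv hw hq (by linarith) (by linarith) (by ring)
    have hmem2 : l' • w + (1-l') • q ∈ X := hXconv hw hq h0 (by linarith) (by ring)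
    by_contra hc
    push_neg at hc
    exact hm.2 ((hUrep _ hmem2 _ hmem1).2 hc)
  have hUflat : ∀ w ∈ X, ∀ q ∈ X, U w = U q → ∀ l : ℝ, 0 ≤ l → l ≤ 1 →
      U (l • w + (1-l) • q) = U w := by
    intro w hw q hq he l h0 h1
    have hf := flat_seg X hXconv r hcomp htrans hbet hw hq
      ((hUrep w hw q hq).2 (le_of_eq he.symm)) ((hUrep q hq w hw).2 (le_of_eq he)) h0 h1
    have hmem : l • w + (1-l) • q ∈ X := hXconv hw hq h0 (by linarith) (by ring)
    exact le_antisymm ((hUrep w hw _ hmem).1 hf.2) ((hUrep _ hmem w hw).1 hf.1)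
  -- construct u
  have hex : ∀ x t, ∃ c, ((x ∈ X ∧ t ∈ Ioo (0:ℝ) 1) → dspec U xs xl x t c) ∧
      (¬(x ∈ X ∧ t ∈ Ioo (0:ℝ) 1) → c = U x) := by
    intro x t
    by_cases h : x ∈ X ∧ t ∈ Ioo (0:ℝ) 1
    · obtain ⟨c, hc⟩ := spec_exists X hXconv U xs xl hxs hxl hUxs hUxl hUcont x h.1 t h.2
      exact ⟨c, fun _ => hc, fun h' => absurd h h'⟩
    · exact ⟨U x, fun h' => absurd h' h, fun _ => rfl⟩
  choose u huspec using hex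
  have hu : ∀ x ∈ X, ∀ t ∈ Ioo (0:ℝ) 1, dspec U xs xl x t (u x t) :=
    fun x hx t ht => (huspec x t).1 ⟨hx, ht⟩
  have huout : ∀ x t, ¬(x ∈ X ∧ t ∈ Ioo (0:ℝ) 1) → u x t = U x :=
    fun x t h => (huspec x t).2 h
  have hfix : ∀ x ∈ X, U x = u x (U x) := by
    intro x hx
    by_cases hin : U x ∈ Ioo (0:ℝ) 1
    · exact (((branch_facts X U xs xl u hu x hx (U x) hin).2.2.2.2).1 rfl).symm
    · exact (huout x (U x) (fun h => hin h.2)).symm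
  refine ⟨u, ?_, ?_, ?_, ?_, ?_⟩
  · -- (i)
    intro t ht
    exact ⟨cont_x X hXconv U xs xl hxs hxl hUxs hUxl hUX hUcont hUmono u hu t ht,
      fun x hx y hy l hl =>
        lin_all X hXconv U xs xl hxs hxl hUxs hUxl hUX hz hUmono hUflat u hu x hx y hy t ht l hl⟩
  · -- (ii)
    exact cont_t X hXconv U xs xl hxs hxl hUxs hUxl hUX hUcont hUmono u hu
  · -- (iii)
    refine ⟨xs, hxs, xl, hxl, fun t ht => ⟨?_, ?_⟩⟩
    · by_cases hin : t ∈ Ioo (0:ℝ) 1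
      · refine calib_low X hXconv U xs xl hxs hxl hUxs hUxl hUX hUmono hUflat u hu
          xs hxs t hin 1 (le_of_lt hin.2) ?_
        rw [div_one]
        exact hz t ht
      · rw [huout xs t (fun h => hin h.2), hUxs]
    · by_cases hin : t ∈ Ioo (0:ℝ) 1
      · refine calib_high X hXconv U xs xl hxs hxl hUxs hUxl hUX hUmono hUflat u hu
          xl hxl t hin 0 (le_of_lt hin.1) ?_
        have e : ((1-t)/(1-(0:ℝ))) • xl + (1 - (1-t)/(1-(0:ℝ))) • xs
            = t • xs + (1-t) • xl := by
          match_scalars <;> field_simp <;> ring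
        rw [e]
        exact hz t ht
      · rw [huout xl t (fun h => hin h.2), hUxl]
  · -- (iv)
    intro x hx
    refine ⟨U x, ⟨hUX x hx, hfix x hx⟩, ?_⟩
    rintro t' ⟨ht'I, ht'⟩
    by_cases hin : t' ∈ Ioo (0:ℝ) 1
    · exact (((branch_facts X U xs xl u hu x hx t' hin).2.2.2.2).2 ht'.symm).symm
    · rw [huout x t' (fun h => hin h.2)] at ht'
      exact ht'
  · -- (v)
    refine ⟨U, hUcont, hfix, ?_⟩
    intro x hx y hy
    rw [ge_iff_le]
    exact hUrep x hx y hy
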